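/- arXiv:1109.6426 — 2 statements merged into one kernel-verified Lean document; each statement's English description precedes it below -/
import Mathlib

section
/- Let u = [u₂; u₁] and ũ = [ũ₂; ũ₁] with u₁, u₂, ũ₁, ũ₂ ∈ ℂⁿ and ‖u₁‖ = ‖ũ₁‖ = 1. Then sin∠(u₁, ũ₁) ≤ min{‖u‖, ‖ũ‖} · sin∠(u, ũ), where for nonzero vectors a, b, sin∠(a, b) := min over scalars α of ‖a/‖a‖ − α b‖. -/
open Matrix Polynomial

/-- Euclidean norm of a complex vector. -/
noncomputable def vnorm {ι : Type*} [Fintype ι] (x : ι → ℂ) : ℝ :=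
  Real.sqrt (∑ i, ‖x i‖ ^ 2)

/-- Spectral norm (operator 2-norm) of a complex matrix. -/
noncomputable def spec {ι κ : Type*} [Fintype ι] [Fintype κ] [DecidableEq κ]
    (A : Matrix ι κ ℂ) : ℝ :=
  ‖LinearMap.toContinuousLinearMap (Matrix.toEuclideanLin A)‖

/-- Sine of the angle between two vectors: distance from a/‖a‖ to span{b}. -/
noncomputable def sAngle {ι : Type*} [Fintype ι] (a b : ι → ℂ) : ℝ :=
  ⨅ α : ℂ, vnorm ((vnorm a)⁻¹ • a - α • b)

section Key

variable {E : Type*} [NormedAddCommGroup E] [InnerProductSpace ℂ E]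

local notation "⟪" x ", " y "⟫" => @inner ℂ _ _ x y

lemma key_unit (a b : E) (ha : ‖a‖ = 1) (hb : b ≠ 0) :
    (⨅ α : ℂ, ‖a - α • b‖) = Real.sqrt (1 - (‖⟪a, b⟫‖ / ‖b‖)^2) := by
  set c : ℂ := ⟪a, b⟫ with hc
  set t : ℝ := ‖b‖ with htdef
  have ht : 0 < t := norm_pos_iff.mpr hb
  have hexp : ∀ α : ℂ, ‖a - α • b‖ ^ 2 = 1 - 2 * (α * c).re + ‖α‖^2 * t^2 := by
    intro α
    rw [norm_sub_sq (𝕜 := ℂ), inner_smul_right, norm_smul, ha]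
    simp [mul_pow]
    rfl
  apply le_antisymm
  · refine le_trans (ciInf_le ⟨0, by rintro x ⟨α, rfl⟩; positivity⟩
      ((starRingEnd ℂ) c / ((t:ℂ)^2))) (le_of_eq ?_)
    set α₀ : ℂ := (starRingEnd ℂ) c / ((t:ℂ)^2) with hα₀
    rw [← Real.sqrt_sq (norm_nonneg (a - α₀ • b))]
    congr 1
    rw [hexp α₀]
    have h1 : α₀ * c = ((‖c‖^2 / t^2 : ℝ) : ℂ) := by
      rw [hα₀]
      rw [div_mul_eq_mul_div, Complex.conj_mul']
      push_cast
      norm_num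
    have h2 : ‖α₀‖ = ‖c‖ / t^2 := by
      rw [hα₀, norm_div, RCLike.norm_conj]
      norm_num
    rw [h1, h2, Complex.ofReal_re]
    field_simp
    ring
  · apply le_ciInf
    intro α
    have h1 : Real.sqrt (1 - (‖c‖ / t)^2) ≤ Real.sqrt (‖a - α • b‖^2) := by
      apply Real.sqrt_le_sqrt
      rw [hexp α]
      have hre2 : (α * c).re ≤ ‖α‖ * (‖c‖ / t * t) := by
        rw [div_mul_cancel₀ _ ht.ne']
        calc (α * c).re ≤ ‖α * c‖ := Complex.re_le_norm _
        _ = ‖α‖ * ‖c‖ := norm_mul _ _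
      nlinarith [sq_nonneg (‖α‖ * t - ‖c‖ / t)]
    rwa [Real.sqrt_sq (norm_nonneg _)] at h1

lemma key (a b : E) (ha : a ≠ 0) (hb : b ≠ 0) :
    (⨅ α : ℂ, ‖‖a‖⁻¹ • a - α • b‖) =
      Real.sqrt (1 - (‖⟪a, b⟫‖ / (‖a‖ * ‖b‖))^2) := by
  have hna : (0:ℝ) < ‖a‖ := norm_pos_iff.mpr ha
  have ha' : ‖(‖a‖⁻¹ • a : E)‖ = 1 := by
    rw [norm_smul, norm_inv, norm_norm, inv_mul_cancel₀ hna.ne']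
  rw [key_unit _ b ha' hb]
  congr 2
  have hs : (‖a‖⁻¹ • a : E) = ((‖a‖⁻¹ : ℝ) : ℂ) • a := by
    rw [RCLike.real_smul_eq_coe_smul (K := ℂ)]
    norm_num
  have h3 : ⟪(‖a‖⁻¹ • a : E), b⟫ = ((‖a‖⁻¹ : ℝ) : ℂ) * ⟪a, b⟫ := by
    rw [hs, inner_smul_left]
    norm_num
  rw [h3, norm_mul]
  have h4 : ‖(((‖a‖⁻¹:ℝ)) : ℂ)‖ = ‖a‖⁻¹ := by
    rw [Complex.norm_real, norm_inv, norm_norm]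
  rw [h4]
  field_simp

lemma key_symm (a b : E) (ha : a ≠ 0) (hb : b ≠ 0) :
    (⨅ α : ℂ, ‖‖a‖⁻¹ • a - α • b‖) = (⨅ α : ℂ, ‖‖b‖⁻¹ • b - α • a‖) := by
  rw [key a b ha hb, key b a hb ha, ← inner_conj_symm a b, RCLike.norm_conj, mul_comm ‖a‖]

end Key

/-- View a plain function as a Euclidean-space vector. -/
noncomputable def toE {ι : Type*} [Fintype ι] (x : ι → ℂ) : EuclideanSpace ℂ ι := WithLp.toLp 2 x

lemma vnorm_eq {ι : Type*} [Fintype ι] (x : ι → ℂ) : vnorm x = ‖toE x‖ :=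
  (EuclideanSpace.norm_eq (toE x)).symm

lemma sAngle_eq {ι : Type*} [Fintype ι] (a b : ι → ℂ) :
    sAngle a b = ⨅ α : ℂ, ‖‖toE a‖⁻¹ • toE a - α • toE b‖ := by
  unfold sAngle
  congr 1
  funext α
  rw [vnorm_eq, vnorm_eq]
  rfl

lemma sAngle_symm {ι : Type*} [Fintype ι] (a b : ι → ℂ)
    (ha : vnorm a ≠ 0) (hb : vnorm b ≠ 0) : sAngle a b = sAngle b a := by
  rw [sAngle_eq, sAngle_eq]
  refine key_symm (toE a) (toE b) ?_ ?_
  · exact norm_ne_zero_iff.mp (by rw [← vnorm_eq]; exact ha)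
  · exact norm_ne_zero_iff.mp (by rw [← vnorm_eq]; exact hb)

lemma vnorm_smul {ι : Type*} [Fintype ι] (c : ℂ) (x : ι → ℂ) :
    vnorm (c • x) = ‖c‖ * vnorm x := by
  rw [vnorm_eq, vnorm_eq, ← norm_smul]
  rfl

lemma vnorm_elim_le {ι κ : Type*} [Fintype ι] [Fintype κ] (x : ι → ℂ) (y : κ → ℂ) :
    vnorm y ≤ vnorm (Sum.elim x y) := by
  unfold vnorm
  apply Real.sqrt_le_sqrt
  rw [Fintype.sum_sum_type]
  simp only [Sum.elim_inl, Sum.elim_inr]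
  have : (0:ℝ) ≤ ∑ i, ‖x i‖^2 := by positivity
  linarith

lemma sAngle_nonneg {ι : Type*} [Fintype ι] (a b : ι → ℂ) : 0 ≤ sAngle a b :=
  Real.iInf_nonneg fun _ => Real.sqrt_nonneg _

lemma boundB {n : ℕ} (u2 u1 tu2 tu1 : Fin n → ℂ)
    (h1 : vnorm u1 = 1) (h2 : vnorm tu1 = 1) :
    sAngle u1 tu1 ≤ vnorm (Sum.elim u2 u1) * sAngle (Sum.elim u2 u1) (Sum.elim tu2 tu1) := by
  set N := vnorm (Sum.elim u2 u1) with hN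
  have hN1 : (1:ℝ) ≤ N := h1 ▸ vnorm_elim_le u2 u1
  have hN0 : (0:ℝ) < N := lt_of_lt_of_le one_pos hN1
  rw [← div_le_iff₀' hN0]
  show sAngle u1 tu1 / N ≤
    ⨅ α : ℂ, vnorm (N⁻¹ • Sum.elim u2 u1 - α • Sum.elim tu2 tu1)
  apply le_ciInf
  intro α
  rw [div_le_iff₀' hN0]
  calc sAngle u1 tu1 ≤ vnorm (u1 - ((N:ℂ)*α) • tu1) := by
        refine le_trans (ciInf_le ⟨0, by rintro x ⟨β, rfl⟩; exact Real.sqrt_nonneg _⟩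
          ((N:ℂ)*α)) (le_of_eq ?_)
        rw [h1]
        norm_num
  _ = N * vnorm (N⁻¹ • u1 - α • tu1) := by
        have he : u1 - ((N:ℂ)*α) • tu1 = (N:ℂ) • (N⁻¹ • u1 - α • tu1) := by
          funext i
          simp only [Pi.sub_apply, Pi.smul_apply, smul_eq_mul, Complex.real_smul]
          have hNc : (N:ℂ) ≠ 0 := by exact_mod_cast hN0.ne'
          push_cast
          field_simp
        rw [he, vnorm_smul]
        rw [Complex.norm_real, Real.norm_eq_abs, abs_of_pos hN0]
  _ ≤ N * vnorm (N⁻¹ • Sum.elim u2 u1 - α • Sum.elim tu2 tu1) := by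
        have he2 : N⁻¹ • Sum.elim u2 u1 - α • Sum.elim tu2 tu1
            = Sum.elim (N⁻¹ • u2 - α • tu2) (N⁻¹ • u1 - α • tu1) := by
          funext i; cases i <;> rfl
        rw [he2]
        exact mul_le_mul_of_nonneg_left (vnorm_elim_le _ _) hN0.le

theorem stmt6 {n : ℕ} (u2 u1 tu2 tu1 : Fin n → ℂ)
    (h1 : vnorm u1 = 1) (h2 : vnorm tu1 = 1) :
    sAngle u1 tu1 ≤
      min (vnorm (Sum.elim u2 u1)) (vnorm (Sum.elim tu2 tu1)) *
        sAngle (Sum.elim u2 u1) (Sum.elim tu2 tu1) := by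
  have hA : (1:ℝ) ≤ vnorm (Sum.elim u2 u1) := h1 ▸ vnorm_elim_le u2 u1
  have hB : (1:ℝ) ≤ vnorm (Sum.elim tu2 tu1) := h2 ▸ vnorm_elim_le tu2 tu1
  have hA0 : vnorm (Sum.elim u2 u1) ≠ 0 := by linarith
  have hB0 : vnorm (Sum.elim tu2 tu1) ≠ 0 := by linarith
  have hb1 : sAngle u1 tu1 ≤
      vnorm (Sum.elim u2 u1) * sAngle (Sum.elim u2 u1) (Sum.elim tu2 tu1) :=
    boundB u2 u1 tu2 tu1 h1 h2
  have hb2 : sAngle u1 tu1 ≤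
      vnorm (Sum.elim tu2 tu1) * sAngle (Sum.elim u2 u1) (Sum.elim tu2 tu1) := by
    rw [sAngle_symm u1 tu1 (by rw [h1]; norm_num) (by rw [h2]; norm_num),
      sAngle_symm (Sum.elim u2 u1) (Sum.elim tu2 tu1) hA0 hB0]
    exact boundB tu2 tu1 u2 u1 h2 h1
  rw [min_mul_of_nonneg _ _ (sAngle_nonneg _ _)]
  exact le_min hb1 hb2
end

section
/- Elsner's theorem: let C, C̃ ∈ ℂ^{n×n}. For every eigenvalue λ of C there exists an eigenvalue λ̃ of C̃ such that |λ − λ̃| ≤ (‖C‖ + ‖C̃‖)^{1 − 1/n} · ‖C − C̃‖^{1/n}, where ‖·‖ is the spectral norm. -/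
open Matrix Polynomial
open scoped ComplexOrder

section aux
variable {n : ℕ}

private lemma vnorm_eq_norm (x : Fin n → ℂ) :
    vnorm x = ‖(WithLp.equiv 2 (Fin n → ℂ)).symm x‖ := by
  rw [EuclideanSpace.norm_eq, vnorm]
  rfl

private lemma vnorm_nonneg (x : Fin n → ℂ) : 0 ≤ vnorm x := Real.sqrt_nonneg _

private lemma sum_sq_eq_vnorm (x : Fin n → ℂ) : ∑ i, ‖x i‖ ^ 2 = vnorm x ^ 2 := by
  rw [vnorm, Real.sq_sqrt]
  positivity

private lemma spec_nonneg (A : Matrix (Fin n) (Fin n) ℂ) : 0 ≤ spec A := norm_nonneg _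

private lemma vnorm_mulVec_le (A : Matrix (Fin n) (Fin n) ℂ) (x : Fin n → ℂ) :
    vnorm (A *ᵥ x) ≤ spec A * vnorm x := by
  have h := (LinearMap.toContinuousLinearMap (Matrix.toEuclideanLin A)).le_opNorm
    ((WithLp.equiv 2 (Fin n → ℂ)).symm x)
  rw [LinearMap.coe_toContinuousLinearMap'] at h
  rw [vnorm_eq_norm, vnorm_eq_norm]
  exact h

private lemma spec_le_of_forall (A : Matrix (Fin n) (Fin n) ℂ) {c : ℝ} (hc : 0 ≤ c)
    (h : ∀ x : Fin n → ℂ, vnorm (A *ᵥ x) ≤ c * vnorm x) : spec A ≤ c := by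
  apply ContinuousLinearMap.opNorm_le_bound _ hc
  intro x
  have h2 := h ((WithLp.equiv 2 (Fin n → ℂ)) x)
  rw [vnorm_eq_norm, vnorm_eq_norm, Equiv.symm_apply_apply] at h2
  rw [LinearMap.coe_toContinuousLinearMap', Matrix.toEuclideanLin_apply]
  exact h2

private lemma vnorm_smul_s11 (a : ℂ) (x : Fin n → ℂ) : vnorm (a • x) = ‖a‖ * vnorm x := by
  rw [vnorm_eq_norm, vnorm_eq_norm, ← norm_smul a ((WithLp.equiv 2 (Fin n → ℂ)).symm x)]
  congr 1

private lemma vnorm_sub_le (a b : Fin n → ℂ) : vnorm (a - b) ≤ vnorm a + vnorm b := by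
  rw [vnorm_eq_norm, vnorm_eq_norm, vnorm_eq_norm]
  exact norm_sub_le _ _

private lemma vnorm_neg (a : Fin n → ℂ) : vnorm (-a) = vnorm a := by
  rw [vnorm_eq_norm, vnorm_eq_norm]
  exact norm_neg _

private lemma vnorm_pos {x : Fin n → ℂ} (hx : x ≠ 0) : 0 < vnorm x := by
  rw [vnorm_eq_norm]
  rw [norm_pos_iff]
  intro h
  apply hx
  have := congrArg (WithLp.equiv 2 (Fin n → ℂ)) h
  simpa using this

private lemma star_dot_self (v : Fin n → ℂ) :
    star v ⬝ᵥ v = ((∑ i, ‖v i‖ ^ 2 : ℝ) : ℂ) := by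
  rw [Complex.ofReal_sum]
  refine Finset.sum_congr rfl fun i _ => ?_
  rw [Pi.star_apply, Complex.star_def, mul_comm, Complex.mul_conj]
  norm_cast
  rw [Complex.normSq_eq_norm_sq]

private lemma rayleigh_eq (M : Matrix (Fin n) (Fin n) ℂ) (v : Fin n → ℂ) :
    star v ⬝ᵥ ((Mᴴ * M) *ᵥ v) = ((∑ i, ‖(M *ᵥ v) i‖ ^ 2 : ℝ) : ℂ) := by
  rw [← Matrix.mulVec_mulVec, Matrix.dotProduct_mulVec, ← Matrix.star_mulVec, star_dot_self]

private lemma abs_det_le (hn : 0 < n) (M : Matrix (Fin n) (Fin n) ℂ) (x : Fin n → ℂ)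
    (hx : vnorm x = 1) : ‖M.det‖ ≤ vnorm (M *ᵥ x) * spec M ^ (n - 1) := by
  haveI : Nonempty (Fin n) := ⟨⟨0, hn⟩⟩
  have hps : (Mᴴ * M).PosSemidef := Matrix.posSemidef_conjTranspose_mul_self M
  have hH : (Mᴴ * M).IsHermitian := hps.isHermitian
  set μ := hH.eigenvalues with hμdef
  have hub : ∀ i, μ i ≤ spec M ^ 2 := by
    intro i
    set v : Fin n → ℂ := ⇑(hH.eigenvectorBasis i) with hv
    have hvn : vnorm v = 1 := by
      rw [vnorm_eq_norm]
      exact hH.eigenvectorBasis.orthonormal.1 i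
    have hmv : (Mᴴ * M) *ᵥ v = (μ i : ℂ) • v := by
      have h := hH.mulVec_eigenvectorBasis i
      rw [← hv] at h
      rw [h]
      ext j
      simp [Complex.real_smul, hμdef]
    have h1 : star v ⬝ᵥ ((Mᴴ * M) *ᵥ v) = ((μ i : ℝ) : ℂ) := by
      rw [hmv, dotProduct_smul, star_dot_self, sum_sq_eq_vnorm, hvn]
      simp
    have h2 := rayleigh_eq M v
    have hreal : μ i = ∑ j, ‖(M *ᵥ v) j‖ ^ 2 := by
      have := h1.symm.trans h2
      exact_mod_cast this
    rw [hreal, sum_sq_eq_vnorm]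
    calc vnorm (M *ᵥ v) ^ 2 ≤ (spec M * vnorm v) ^ 2 :=
          pow_le_pow_left₀ (vnorm_nonneg _) (vnorm_mulVec_le M v) 2
      _ = spec M ^ 2 := by rw [hvn]; ring
  have hmin : ∃ i0, μ i0 ≤ vnorm (M *ᵥ x) ^ 2 := by
    set U : Matrix (Fin n) (Fin n) ℂ := ↑(hH.eigenvectorUnitary) with hU
    set y := (star U) *ᵥ x with hy
    have hUU : U * star U = 1 := Matrix.mem_unitaryGroup_iff.mp hH.eigenvectorUnitary.2
    have hstep : ∀ w : Fin n → ℂ, star x ⬝ᵥ (U *ᵥ w) = star y ⬝ᵥ w := by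
      intro w
      rw [Matrix.dotProduct_mulVec]
      congr 1
      rw [hy, Matrix.star_mulVec, Matrix.star_eq_conjTranspose,
        Matrix.conjTranspose_conjTranspose]
    have hsum1 : ∑ i, ‖y i‖ ^ 2 = 1 := by
      have h1 : star y ⬝ᵥ y = star x ⬝ᵥ x := by
        rw [← hstep y, hy, Matrix.mulVec_mulVec, hUU, Matrix.one_mulVec]
      rw [star_dot_self, star_dot_self] at h1
      have h2 : (∑ i, ‖y i‖ ^ 2) = ∑ i, ‖x i‖ ^ 2 := by exact_mod_cast h1
      rw [h2, sum_sq_eq_vnorm, hx]; norm_num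
    have hray : ∑ i, ‖(M *ᵥ x) i‖ ^ 2 = ∑ i, μ i * ‖y i‖ ^ 2 := by
      have h0 : ((∑ i, ‖(M *ᵥ x) i‖ ^ 2 : ℝ) : ℂ) = star x ⬝ᵥ ((Mᴴ * M) *ᵥ x) :=
        (rayleigh_eq M x).symm
      rw [hH.spectral_theorem, Unitary.conjStarAlgAut_apply, ← hU] at h0
      rw [Matrix.mul_assoc, ← Matrix.mulVec_mulVec, hstep, ← Matrix.mulVec_mulVec, ← hy] at h0
      have h3 : star y ⬝ᵥ (Matrix.diagonal (RCLike.ofReal ∘ μ) *ᵥ y)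
          = ((∑ i, μ i * ‖y i‖ ^ 2 : ℝ) : ℂ) := by
        rw [dotProduct, Complex.ofReal_sum]
        refine Finset.sum_congr rfl fun i _ => ?_
        rw [Matrix.mulVec_diagonal]
        rw [Pi.star_apply, Complex.star_def]
        have : (starRingEnd ℂ) (y i) * ((RCLike.ofReal ∘ μ) i * y i)
            = (μ i : ℂ) * ((starRingEnd ℂ) (y i) * y i) := by
          show (starRingEnd ℂ) (y i) * ((μ i : ℂ) * y i) = _
          ring
        rw [this, mul_comm ((starRingEnd ℂ) (y i)) (y i), Complex.mul_conj]
        rw [Complex.normSq_eq_norm_sq]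
        push_cast
        ring
      rw [h3] at h0
      exact_mod_cast h0
    obtain ⟨i0, -, hi0⟩ := Finset.exists_min_image Finset.univ μ Finset.univ_nonempty
    refine ⟨i0, ?_⟩
    rw [← sum_sq_eq_vnorm, hray]
    calc μ i0 = μ i0 * ∑ i, ‖y i‖ ^ 2 := by rw [hsum1]; ring
      _ = ∑ i, μ i0 * ‖y i‖ ^ 2 := by rw [Finset.mul_sum]
      _ ≤ ∑ i, μ i * ‖y i‖ ^ 2 := by
          refine Finset.sum_le_sum fun i _ => ?_
          exact mul_le_mul_of_nonneg_right (hi0 i (Finset.mem_univ i)) (by positivity)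
  obtain ⟨i0, hi0⟩ := hmin
  have hdet2 : ‖M.det‖ ^ 2 = ∏ i, μ i := by
    have h1 : (Mᴴ * M).det = ∏ i, (μ i : ℂ) := hH.det_eq_prod_eigenvalues
    have h2 : (Mᴴ * M).det = star M.det * M.det := by
      rw [Matrix.det_mul, Matrix.det_conjTranspose]
    rw [h2] at h1
    have h3 : ((‖M.det‖ ^ 2 : ℝ) : ℂ) = ((∏ i, μ i : ℝ) : ℂ) := by
      push_cast
      rw [← h1, Complex.star_def, mul_comm, Complex.mul_conj]
      rw [Complex.normSq_eq_norm_sq]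
      push_cast; ring
    exact_mod_cast h3
  have hprod : ∏ i, μ i ≤ vnorm (M *ᵥ x) ^ 2 * (spec M ^ 2) ^ (n - 1) := by
    rw [← Finset.mul_prod_erase Finset.univ μ (Finset.mem_univ i0)]
    have hcard : (Finset.univ.erase i0).card = n - 1 := by
      rw [Finset.card_erase_of_mem (Finset.mem_univ i0), Finset.card_univ, Fintype.card_fin]
    refine mul_le_mul hi0 ?_ ?_ (by positivity)
    · calc ∏ i ∈ Finset.univ.erase i0, μ i ≤ ∏ i ∈ Finset.univ.erase i0, spec M ^ 2 :=
            Finset.prod_le_prod (fun i _ => hps.eigenvalues_nonneg i) (fun i _ => hub i)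
        _ = (spec M ^ 2) ^ (n - 1) := by rw [Finset.prod_const, hcard]
    · exact Finset.prod_nonneg fun i _ => hps.eigenvalues_nonneg i
  have hfin : ‖M.det‖ ^ 2 ≤ (vnorm (M *ᵥ x) * spec M ^ (n - 1)) ^ 2 := by
    rw [hdet2]
    calc ∏ i, μ i ≤ vnorm (M *ᵥ x) ^ 2 * (spec M ^ 2) ^ (n - 1) := hprod
      _ = (vnorm (M *ᵥ x) * spec M ^ (n - 1)) ^ 2 := by rw [mul_pow, pow_right_comm]
  have hb : 0 ≤ vnorm (M *ᵥ x) * spec M ^ (n - 1) := by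
    have := vnorm_nonneg (M *ᵥ x); have := spec_nonneg M; positivity
  exact le_of_pow_le_pow_left₀ two_ne_zero hb hfin

private lemma eval_charpoly' (A : Matrix (Fin n) (Fin n) ℂ) (μ : ℂ) :
    A.charpoly.eval μ = (μ • (1 : Matrix (Fin n) (Fin n) ℂ) - A).det := by
  rw [Matrix.charpoly, ← Polynomial.coe_evalRingHom, RingHom.map_det]
  congr 1
  ext i j
  by_cases h : i = j <;>
    simp [h, Matrix.charmatrix_apply, Matrix.one_apply, Matrix.diagonal_apply]

private lemma det_sub_smul_eq (A : Matrix (Fin n) (Fin n) ℂ) (μ : ℂ) :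
    (A - μ • 1).det = (-1) ^ n * A.charpoly.eval μ := by
  have h : A - μ • 1 = -(μ • (1 : Matrix (Fin n) (Fin n) ℂ) - A) := by rw [neg_sub]
  rw [h, Matrix.det_neg, eval_charpoly', Fintype.card_fin]

private lemma multiset_pow_card_le_prod (a : ℝ) (ha : 0 ≤ a) (s : Multiset ℝ)
    (h : ∀ t ∈ s, a ≤ t) : a ^ Multiset.card s ≤ s.prod := by
  induction s using Multiset.induction with
  | empty => simp
  | cons b s ih =>
    rw [Multiset.prod_cons, Multiset.card_cons, pow_succ, mul_comm (a ^ Multiset.card s) a]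
    have hb : a ≤ b := h b (Multiset.mem_cons_self b s)
    have hih : a ^ Multiset.card s ≤ s.prod := ih fun t ht => h t (Multiset.mem_cons_of_mem ht)
    exact mul_le_mul hb hih (pow_nonneg ha _) (le_trans ha hb)

end aux

/-- Elsner's theorem. -/
theorem stmt11 {n : ℕ} (hn : 0 < n) (C Ct : Matrix (Fin n) (Fin n) ℂ)
    (lam : ℂ) (hlam : (C - lam • 1).det = 0) :
    ∃ lt : ℂ, (Ct - lt • 1).det = 0 ∧
      ‖lam - lt‖ ≤
        (spec C + spec Ct) ^ ((1 : ℝ) - 1 / n) * spec (C - Ct) ^ ((1 : ℝ) / n) := by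
  -- unit eigenvector of C
  obtain ⟨x, hx0, hxeq⟩ := (Matrix.exists_mulVec_eq_zero_iff).mpr hlam
  have hcx : C *ᵥ x = lam • x := by
    have h := hxeq
    rw [Matrix.sub_mulVec, sub_eq_zero, Matrix.smul_mulVec, Matrix.one_mulVec] at h
    exact h
  set c : ℂ := ((vnorm x : ℝ) : ℂ)⁻¹ with hc
  set z : Fin n → ℂ := c • x with hzdef
  have hvx : 0 < vnorm x := vnorm_pos hx0
  have hz1 : vnorm z = 1 := by
    rw [hzdef, vnorm_smul_s11, hc]
    rw [norm_inv, Complex.norm_real, Real.norm_eq_abs, abs_of_pos hvx]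
    field_simp
  have hcz : C *ᵥ z = lam • z := by
    rw [hzdef, Matrix.mulVec_smul, hcx, smul_comm]
  -- |lam| ≤ spec C
  have hlamC : ‖lam‖ ≤ spec C := by
    have h1 : vnorm (C *ᵥ z) = ‖lam‖ := by rw [hcz, vnorm_smul_s11, hz1, mul_one]
    have h2 := vnorm_mulVec_le C z
    rw [h1, hz1, mul_one] at h2
    exact h2
  set S : ℝ := spec C + spec Ct with hS
  set D : ℝ := spec (C - Ct) with hD
  have hS0 : 0 ≤ S := add_nonneg (spec_nonneg C) (spec_nonneg Ct)
  have hD0 : 0 ≤ D := spec_nonneg _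
  set M : Matrix (Fin n) (Fin n) ℂ := Ct - lam • 1 with hM
  -- M z = (Ct - C) z
  have hMz : vnorm (M *ᵥ z) ≤ D := by
    have h1 : M *ᵥ z = -((C - Ct) *ᵥ z) := by
      rw [hM, ← Matrix.neg_mulVec, neg_sub]
      rw [Matrix.sub_mulVec, Matrix.sub_mulVec, Matrix.smul_mulVec, Matrix.one_mulVec]
      rw [← hcz]
    rw [h1, vnorm_neg]
    have h2 := vnorm_mulVec_le (C - Ct) z
    rw [hz1, mul_one] at h2
    exact h2
  -- spec M ≤ S
  have hMS : spec M ≤ S := by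
    have h1 : spec M ≤ spec Ct + ‖lam‖ := by
      apply spec_le_of_forall _ (add_nonneg (spec_nonneg Ct) (norm_nonneg lam))
      intro v
      have he : M *ᵥ v = Ct *ᵥ v - lam • v := by
        rw [hM, Matrix.sub_mulVec, Matrix.smul_mulVec, Matrix.one_mulVec]
      rw [he, add_mul]
      refine le_trans (vnorm_sub_le _ _) (add_le_add (vnorm_mulVec_le Ct v) ?_)
      rw [vnorm_smul_s11]
    rw [hS]
    rw [add_comm (spec C) (spec Ct)]
    exact le_trans h1 (add_le_add_right hlamC _)
  -- Hadamard-type bound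
  have hdetM : ‖M.det‖ ≤ D * S ^ (n - 1) := by
    refine le_trans (abs_det_le hn M z hz1) ?_
    exact mul_le_mul hMz (pow_le_pow_left₀ (spec_nonneg M) hMS _) (pow_nonneg (spec_nonneg M) _) hD0
  -- roots of the characteristic polynomial of Ct
  set p := Ct.charpoly with hp
  have hmonic : p.Monic := Ct.charpoly_monic
  have hsplits : p.Splits := IsAlgClosed.splits p
  have hdeg : p.natDegree = n := by
    rw [hp, Ct.charpoly_natDegree_eq_dim, Fintype.card_fin]
  have hcard : Multiset.card p.roots = n := by
    rw [← hdeg, Polynomial.splits_iff_card_roots.mp hsplits]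
  have hprodf : ∀ μ : ℂ, p.eval μ = (p.roots.map (fun r => μ - r)).prod := by
    intro μ
    conv_lhs => rw [hsplits.eq_prod_roots_of_monic hmonic]
    rw [Polynomial.eval_multiset_prod, Multiset.map_map]
    congr 1
    ext r
    simp
  have hne : p.roots.toFinset.Nonempty := by
    rw [Multiset.toFinset_nonempty]
    intro h0
    rw [h0, Multiset.card_zero] at hcard
    exact hn.ne' hcard.symm
  obtain ⟨r0, hr0mem, hr0min⟩ := Finset.exists_min_image _ (fun r => ‖lam - r‖) hne
  rw [Multiset.mem_toFinset] at hr0mem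
  refine ⟨r0, ?_, ?_⟩
  · have hroot : p.eval r0 = 0 := by
      exact (Polynomial.mem_roots hmonic.ne_zero).mp hr0mem
    rw [det_sub_smul_eq, hroot, mul_zero]
  · -- product of distances ≥ min^n
    have hprodabs : ‖M.det‖ = (p.roots.map (fun r => ‖lam - r‖)).prod := by
      rw [hM, det_sub_smul_eq, ← hp, norm_mul, norm_pow, norm_neg, norm_one, one_pow, one_mul]
      rw [hprodf lam]
      rw [show (‖(Multiset.map (fun r => lam - r) p.roots).prod‖ : ℝ)
          = (normHom : ℂ →*₀ ℝ) (Multiset.map (fun r => lam - r) p.roots).prod from rfl,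
        map_multiset_prod (normHom : ℂ →*₀ ℝ) _, Multiset.map_map]
      congr 1
    have hpow : ‖lam - r0‖ ^ n ≤ ‖M.det‖ := by
      rw [hprodabs]
      have hcard2 : Multiset.card (p.roots.map (fun r => ‖lam - r‖)) = n := by
        rw [Multiset.card_map, hcard]
      rw [← hcard2]
      apply multiset_pow_card_le_prod _ (norm_nonneg _)
      intro t ht
      obtain ⟨r, hr, rfl⟩ := Multiset.mem_map.mp ht
      exact hr0min r (Multiset.mem_toFinset.mpr hr)
    have hkey : ‖lam - r0‖ ^ n ≤ D * S ^ (n - 1) := le_trans hpow hdetM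
    -- rpow arithmetic
    have ha0 : (0 : ℝ) ≤ ‖lam - r0‖ := norm_nonneg _
    have hn0 : (n : ℝ) ≠ 0 := Nat.cast_ne_zero.mpr hn.ne'
    have h1 : ‖lam - r0‖ = (‖lam - r0‖ ^ n) ^ ((1 : ℝ) / n) := by
      rw [← Real.rpow_natCast ‖lam - r0‖ n, ← Real.rpow_mul ha0]
      rw [mul_one_div, div_self hn0, Real.rpow_one]
    rw [h1]
    calc (‖lam - r0‖ ^ n) ^ ((1 : ℝ) / n)
        ≤ (D * S ^ (n - 1)) ^ ((1 : ℝ) / n) :=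
          Real.rpow_le_rpow (by positivity) hkey (by positivity)
      _ = D ^ ((1 : ℝ) / n) * (S ^ (n - 1)) ^ ((1 : ℝ) / n) :=
          Real.mul_rpow hD0 (pow_nonneg hS0 _)
      _ = D ^ ((1 : ℝ) / n) * S ^ ((1 : ℝ) - 1 / n) := by
          rw [← Real.rpow_natCast S (n - 1), ← Real.rpow_mul hS0]
          congr 2
          rw [Nat.cast_sub hn]
          field_simp
          norm_num
      _ = S ^ ((1 : ℝ) - 1 / n) * D ^ ((1 : ℝ) / n) := mul_comm _ _
end
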